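/- arXiv:2107.13789 — 3 statements merged into one kernel-verified Lean document; each statement's English description precedes it below -/
import Mathlib

section
/- If the prism G □ K₂ over a graph G has a Hamilton cycle, then G has a 2-walk (a spanning closed walk visiting every vertex at most twice). -/
open SimpleGraph

variable {V : Type*}

/-- Two edges are in the same block iff they are equal or lie on a common cycle. -/
def SameBlock (G : SimpleGraph V) (e f : Sym2 V) : Prop :=
  e = f ∨ ∃ (u : V) (c : G.Walk u u), c.IsCycle ∧ e ∈ c.edges ∧ f ∈ c.edges

/-- A block of `G`, identified with its edge set: an equivalence class of `SameBlock`. -/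
def IsBlock (G : SimpleGraph V) (C : Set (Sym2 V)) : Prop :=
  ∃ e ∈ G.edgeSet, C = {f ∈ G.edgeSet | SameBlock G e f}

/-- The block degree of `v`: the number of blocks containing `v`. -/
noncomputable def blockDegree (G : SimpleGraph V) (v : V) : ℕ :=
  {C : Set (Sym2 V) | IsBlock G C ∧ ∃ e ∈ C, v ∈ e}.ncard

/-- A block that is a single edge (a bridge). -/
def BlockIsEdge (C : Set (Sym2 V)) : Prop := ∃ e, C = {e}

/-- A block that is a cycle. -/
def BlockIsCycle (G : SimpleGraph V) (C : Set (Sym2 V)) : Prop :=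
  ∃ (u : V) (c : G.Walk u u), c.IsCycle ∧ C = {e | e ∈ c.edges}

/-- A cactus: a connected graph each of whose blocks is an edge or a cycle. -/
def IsCactus (G : SimpleGraph V) : Prop :=
  G.Connected ∧ ∀ C, IsBlock G C → BlockIsEdge C ∨ BlockIsCycle G C

/-- An even cactus: a cactus in which every cycle (block) is even. -/
def IsEvenCactus (G : SimpleGraph V) : Prop :=
  IsCactus G ∧ ∀ (u : V) (c : G.Walk u u), c.IsCycle → Even c.length

/-- A good cactus: every vertex lies in at most two blocks. -/
def IsGoodCactus (G : SimpleGraph V) : Prop :=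
  IsCactus G ∧ ∀ v, blockDegree G v ≤ 2

/-- A good even cactus. -/
def IsGoodEvenCactus (G : SimpleGraph V) : Prop :=
  IsEvenCactus G ∧ ∀ v, blockDegree G v ≤ 2

/-- An edge path: a path each of whose edges is itself a block. -/
def IsEdgePath {G : SimpleGraph V} {a b : V} (P : G.Walk a b) : Prop :=
  P.IsPath ∧ ∀ e ∈ P.edges, IsBlock G {e}

/-- `v` is an internal vertex of the path `P`. -/
def Internal {G : SimpleGraph V} {a b : V} (P : G.Walk a b) (v : V) : Prop :=
  v ∈ P.support ∧ v ≠ a ∧ v ≠ b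

/-- A 1-good cactus: `P`-good for some edge path `P`. -/
def Is1Good (G : SimpleGraph V) : Prop :=
  IsCactus G ∧ ∃ (a b : V) (P : G.Walk a b), IsEdgePath P ∧
    ∀ v, (¬ Internal P v → blockDegree G v ≤ 2) ∧ (Internal P v → blockDegree G v ≤ 3)

/-- A 2-good cactus: `{P₁, P₂}`-good for some edge paths sharing at most one vertex. -/
def Is2Good (G : SimpleGraph V) : Prop :=
  IsCactus G ∧ ∃ (a b c d : V) (P₁ : G.Walk a b) (P₂ : G.Walk c d),
    IsEdgePath P₁ ∧ IsEdgePath P₂ ∧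
    {v | v ∈ P₁.support ∧ v ∈ P₂.support}.ncard ≤ 1 ∧
    ∀ v, (¬ Internal P₁ v ∧ ¬ Internal P₂ v → blockDegree G v ≤ 2) ∧
      ((Internal P₁ v ∧ ¬ Internal P₂ v) ∨ (¬ Internal P₁ v ∧ Internal P₂ v) →
        blockDegree G v ≤ 3) ∧
      (Internal P₁ v ∧ Internal P₂ v → blockDegree G v = 4)

/-- The prism over `G`: the Cartesian product `G □ K₂`. -/
def prism (G : SimpleGraph V) : SimpleGraph (V × Fin 2) :=
  G.boxProd (⊤ : SimpleGraph (Fin 2))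

/-- `G □ K₂` has a Hamilton cycle. -/
def IsPrismHamiltonian (G : SimpleGraph V) [DecidableEq V] : Prop :=
  ∃ (x : V × Fin 2) (c : (prism G).Walk x x), c.IsHamiltonianCycle

/-- A closed walk is a `k`-walk if it visits every vertex at least once and at most `k` times. -/
def IsKWalk {G : SimpleGraph V} [DecidableEq V] {v : V} (w : G.Walk v v) (k : ℕ) : Prop :=
  ∀ u, 1 ≤ w.support.tail.count u ∧ w.support.tail.count u ≤ k

/-- `G` has a `k`-walk. -/
def HasKWalk (G : SimpleGraph V) [DecidableEq V] (k : ℕ) : Prop :=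
  ∃ (v : V) (w : G.Walk v v), IsKWalk w k

/-- Maximum degree at most `k`. -/
def MaxDegLE (G : SimpleGraph V) (k : ℕ) : Prop :=
  ∀ v, {u | G.Adj v u}.ncard ≤ k

/-- `T` is a `k`-tree of `G`: a spanning tree of maximum degree at most `k`. -/
def IsKTree (G T : SimpleGraph V) (k : ℕ) : Prop :=
  T ≤ G ∧ T.Connected ∧ T.IsAcyclic ∧ MaxDegLE T k

/-- `G` has a `k`-tree. -/
def HasKTree (G : SimpleGraph V) (k : ℕ) : Prop :=
  ∃ T : SimpleGraph V, IsKTree G T k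

/-- The graph obtained by deleting vertices `s` and `t`. -/
def delete2 (K : SimpleGraph V) (s t : V) : SimpleGraph {v : V // v ≠ s ∧ v ≠ t} :=
  K.induce {v : V | v ≠ s ∧ v ≠ t}

/-- The induced graph on a connected component. -/
def compGraph {W : Type*} (H : SimpleGraph W) (c : H.ConnectedComponent) :
    SimpleGraph c.supp :=
  H.induce c.supp

/-- The number of connected components. -/
noncomputable def numComponents {W : Type*} (H : SimpleGraph W) : ℕ :=
  (Set.univ : Set H.ConnectedComponent).ncard

open Classical in
noncomputable def proj (G : SimpleGraph V) :
    ∀ {x y : V × Fin 2}, (prism G).Walk x y → G.Walk x.1 y.1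
  | _, _, .nil => .nil
  | x, _, .cons (v := z) h p =>
    if hadj : G.Adj x.1 z.1 then .cons hadj (proj G p)
    else (proj G p).copy
      ((((SimpleGraph.boxProd_adj.mp h).resolve_left (fun hc => hadj hc.1)).2).symm) rfl

lemma mem_proj_support (G : SimpleGraph V) {x y : V × Fin 2} (w : (prism G).Walk x y) :
    ∀ z ∈ w.support, z.1 ∈ (proj G w).support := by
  induction w with
  | nil => simp [proj]
  | cons h p ih =>
    intro z hz
    rw [Walk.support_cons, List.mem_cons] at hz
    rw [proj]
    split
    · rcases hz with hz | hz
      · simp [hz]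
      · simp [ih z hz]
    · rcases hz with hz | hz
      · subst hz
        have : _ = z.1 := (((SimpleGraph.boxProd_adj.mp h).resolve_left (fun hc => ‹¬ _› hc.1)).2).symm
        simp [← this, Walk.start_mem_support]
      · simpa using ih z hz

lemma pair_eq_of_fst (x : V × Fin 2) (u : V) (h : x.1 = u) : x = (u, 0) ∨ x = (u, 1) := by
  rcases x with ⟨a, b⟩
  subst h
  have : b = 0 ∨ b = 1 := by omega
  rcases this with h | h <;> simp [h]

lemma count_aux [DecidableEq V] (x : V × Fin 2) (u : V) :
    (if x.1 = u then 1 else 0) ≤ ((if x = (u, 0) then 1 else 0) + (if x = (u, 1) then 1 else 0) : ℕ) := by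
  by_cases h : u = x.1
  · rcases pair_eq_of_fst x u h.symm with h2 | h2 <;> subst h2 <;> simp
  · have h0 : x ≠ (u, (0 : Fin 2)) := fun hh => h (by rw [hh])
    have h1 : x ≠ (u, (1 : Fin 2)) := fun hh => h (by rw [hh])
    have h2 : ¬ x.1 = u := fun hh => h hh.symm
    simp [h0, h1, h2]

lemma count_proj_support [DecidableEq V] (G : SimpleGraph V) {x y : V × Fin 2}
    (w : (prism G).Walk x y) (u : V) :
    (proj G w).support.count u ≤ w.support.count (u, 0) + w.support.count (u, 1) := by
  induction w with
  | nil =>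
    simp only [proj, Walk.support_nil, List.count_cons, List.count_nil, beq_iff_eq,
      Nat.zero_add]
    exact count_aux _ u
  | @cons a b cc h p ih =>
    rw [proj]
    split
    · simp only [Walk.support_cons, List.count_cons, beq_iff_eq]
      have h2 := count_aux a u
      omega
    · rw [Walk.support_copy, Walk.support_cons]
      simp only [List.count_cons, beq_iff_eq]
      omega

lemma end_mem_tail {G : SimpleGraph V} {v : V} (p : G.Walk v v) (hn : ¬ p.Nil) :
    v ∈ p.support.tail := by
  cases p with
  | nil => simp at hn
  | cons h q =>
    rw [Walk.support_cons, List.tail_cons]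
    exact q.end_mem_support


/-- a hamiltonian prism yields a 2-walk. -/
theorem prism_hamiltonian_implies_two_walk [Fintype V] [DecidableEq V]
    (G : SimpleGraph V) (hG : G.Connected) (h : IsPrismHamiltonian G) :
    HasKWalk G 2 := by
  classical
  obtain ⟨x, c, hc⟩ := h
  have hcc : ∀ (l : List (V × Fin 2)) (z : V × Fin 2),
      l.count z = @List.count _ instBEqOfDecidableEq z l := by
    intro l z
    have L : @LawfulBEq (V × Fin 2) instBEqOfDecidableEq :=
      @LawfulBEq.mk _ instBEqOfDecidableEq (@ReflBEq.mk _ instBEqOfDecidableEq (fun {a} => decide_eq_true rfl))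
        (fun {a b} h => of_decide_eq_true h)
    rw [@lawful_beq_subsingleton (V × Fin 2) instBEqProd instBEqOfDecidableEq inferInstance L]
  have hsupcount : ∀ z, c.support.count z = (if z = x then 2 else 1) := by
    intro z
    rw [hcc]
    by_cases hz : z = x
    · subst hz; rw [if_pos rfl]; exact hc.count_support_self
    · rw [if_neg hz]; exact hc.support_count_of_ne (fun hh => hz hh.symm)
  set w := proj G c with hw
  have hsupp := mem_proj_support G c
  have hnil : ¬ w.Nil := by
    intro hn
    have hws : w.support = [x.1] := Walk.nil_iff_support_eq.mp hn
    have hsub : c.support.tail.toFinset ⊆ ({(x.1, 0), (x.1, 1)} : Finset (V × Fin 2)) := by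
      intro z hz
      rw [List.mem_toFinset] at hz
      have hzx : z.1 = x.1 := by
        have := hsupp z (List.mem_of_mem_tail hz)
        rw [hws] at this; simpa using this
      rcases pair_eq_of_fst z x.1 hzx with h2 | h2 <;> simp [h2]
    have hcard := Finset.card_le_card hsub
    rw [List.toFinset_card_of_nodup hc.isCycle.support_nodup] at hcard
    have h3 : 3 ≤ c.length := hc.isCycle.three_le_length
    have hlen : c.support.tail.length = c.length := by
      have h4 := c.length_support
      simp only [List.length_tail, h4]
      omega
    have h2 : ({(x.1, 0), (x.1, 1)} : Finset (V × Fin 2)).card ≤ 2 :=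
      (Finset.card_insert_le _ _).trans (by simp)
    omega
  refine ⟨x.1, w, fun u => ?_⟩
  have hcons : w.support = x.1 :: w.support.tail := w.support_eq_cons
  have hctail : w.support.count u = w.support.tail.count u + (if x.1 = u then 1 else 0) := by
    conv_lhs => rw [hcons]
    rw [List.count_cons]
    by_cases hxu : x.1 = u <;> simp [hxu]
  constructor
  · have humem : u ∈ w.support := hsupp (u, 0) (hc.mem_support _)
    have hmem : u ∈ w.support.tail := by
      by_cases hux : u = x.1
      · subst hux; exact end_mem_tail w hnil
      · rw [hcons] at humem
        rcases List.mem_cons.mp humem with h2 | h2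
        · exact absurd h2 hux
        · exact h2
    exact List.count_pos_iff.mpr hmem
  · have hcnt := count_proj_support G c u
    rw [← hw] at hcnt
    have e0 := hsupcount (u, 0)
    have e1 := hsupcount (u, 1)
    by_cases hux : x.1 = u
    · have hsum : c.support.count (u, 0) + c.support.count (u, 1) ≤ 3 := by
        rw [e0, e1]
        by_cases h0 : ((u, 0) : V × Fin 2) = x <;> by_cases h1 : ((u, 1) : V × Fin 2) = x
        · exact absurd (h0.trans h1.symm) (by simp)
        all_goals simp [h0, h1]
      rw [if_pos hux] at hctail
      omega
    · have h0 : ((u, 0) : V × Fin 2) ≠ x := fun hh => hux (by rw [← hh])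
      have h1 : ((u, 1) : V × Fin 2) ≠ x := fun hh => hux (by rw [← hh])
      rw [if_neg h0] at e0
      rw [if_neg h1] at e1
      rw [if_neg hux] at hctail
      omega
end

section
/- Every 2-walk in a graph G contains a spanning tree of G with maximum degree at most three; more generally, every k-walk contains a subgraph that is a (k+1)-tree. -/
open SimpleGraph

variable {V : Type*}

private lemma auxEdgeMem {V : Type*} {G : SimpleGraph V} :
    ∀ {a b : V} (w : G.Walk a b) (d : V) (i : ℕ), i + 1 < w.support.length →
      s(w.support.getD i d, w.support.getD (i + 1) d) ∈ w.edges := by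
  intro a b w
  induction w with
  | nil => intro d i h; simp [Walk.support_nil] at h
  | @cons a b c hadj p ih =>
    intro d i h
    cases i with
    | zero =>
      rw [Walk.support_cons]
      simp only [List.getD_cons_zero, List.getD_cons_succ]
      have hb : p.support.getD 0 d = b := by rw [p.support_eq_cons]; rfl
      rw [hb, Walk.edges_cons]
      exact List.mem_cons_self
    | succ j =>
      rw [Walk.support_cons]
      simp only [List.getD_cons_succ]
      rw [Walk.edges_cons]
      exact List.mem_cons_of_mem _ (ih d j (by
        rw [Walk.support_cons] at h; simpa using h))

private lemma auxIndexOfLe {V : Type*} [DecidableEq V] (d : V) :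
    ∀ (L : List V) (i : ℕ), i < L.length → L.idxOf (L.getD i d) ≤ i := by
  intro L
  induction L with
  | nil => intro i h; simp at h
  | cons a l ih =>
    intro i h
    cases i with
    | zero => simp
    | succ j =>
      rw [List.getD_cons_succ]
      by_cases hax : a = l.getD j d
      · rw [List.idxOf_cons_eq _ hax]; omega
      · rw [List.idxOf_cons_ne _ hax]
        have := ih j (by simpa using h)
        omega

private lemma auxCount {V : Type*} [DecidableEq V] (d : V) :
    ∀ (L : List V) (x : V),
      ((Finset.range L.length).filter (fun i => L.getD i d = x)).card ≤ L.count x := by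
  intro L
  induction L with
  | nil => simp
  | cons a l ih =>
    intro x
    have hsub : (Finset.range (a :: l).length).filter (fun i => (a :: l).getD i d = x) ⊆
        insert 0 (((Finset.range l.length).filter (fun i => l.getD i d = x)).image Nat.succ) := by
      intro i hi
      simp only [Finset.mem_filter, Finset.mem_range, List.length_cons] at hi
      cases i with
      | zero => simp
      | succ j =>
        rw [List.getD_cons_succ] at hi
        simp only [Finset.mem_insert, Finset.mem_image, Finset.mem_filter, Finset.mem_range]
        exact Or.inr ⟨j, ⟨by omega, hi.2⟩, rfl⟩
    have hcount : (a :: l).count x = l.count x + if a = x then 1 else 0 := by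
      simp only [List.count_cons, beq_iff_eq]
    by_cases hax : a = x
    · have h1 := Finset.card_le_card hsub
      have h2 := Finset.card_insert_le 0
        (((Finset.range l.length).filter (fun i => l.getD i d = x)).image Nat.succ)
      have h3 : (((Finset.range l.length).filter (fun i => l.getD i d = x)).image Nat.succ).card
          = ((Finset.range l.length).filter (fun i => l.getD i d = x)).card :=
        Finset.card_image_of_injective _ Nat.succ_injective
      have h4 := ih x
      rw [hcount, if_pos hax]
      omega
    · have hsub2 : (Finset.range (a :: l).length).filter (fun i => (a :: l).getD i d = x) ⊆
          ((Finset.range l.length).filter (fun i => l.getD i d = x)).image Nat.succ := by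
        intro i hi
        simp only [Finset.mem_filter, Finset.mem_range, List.length_cons] at hi
        cases i with
        | zero => exact absurd hi.2 (by simpa using hax)
        | succ j =>
          rw [List.getD_cons_succ] at hi
          simp only [Finset.mem_image, Finset.mem_filter, Finset.mem_range]
          exact ⟨j, ⟨by omega, hi.2⟩, rfl⟩
      have h1 := Finset.card_le_card hsub2
      have h3 : (((Finset.range l.length).filter (fun i => l.getD i d = x)).image Nat.succ).card
          = ((Finset.range l.length).filter (fun i => l.getD i d = x)).card :=
        Finset.card_image_of_injective _ Nat.succ_injective
      have h4 := ih x
      rw [hcount, if_neg hax]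
      omega

private lemma auxHeadGetLastNe {α : Type*} {l : List α} (hl : l.Nodup) (h2 : 2 ≤ l.length)
    (h : l ≠ []) : l.head h ≠ l.getLast h := by
  intro he
  rw [List.head_eq_getElem_zero, List.getLast_eq_getElem] at he
  have := (List.Nodup.getElem_inj_iff hl).mp he
  omega

/-- every `k`-walk contains a spanning tree of maximum degree at
most `k + 1`; in particular a 2-walk contains a 3-tree. -/
theorem kwalk_contains_k_plus_one_tree [Fintype V] [DecidableEq V]
    (G : SimpleGraph V) (hG : G.Connected) (k : ℕ) (v : V) (w : G.Walk v v)
    (hw : IsKWalk w k) :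
    ∃ T : SimpleGraph V, T ≤ G ∧ T.Connected ∧ T.IsAcyclic ∧
      MaxDegLE T (k + 1) ∧ T.edgeSet ⊆ {e | e ∈ w.edges} := by
  classical
  set L : List V := w.support with hL
  have hmem : ∀ u : V, u ∈ L := by
    intro u
    have h1 := (hw u).1
    have h2 : u ∈ w.support.tail := by
      rw [← List.count_pos_iff]; omega
    exact List.mem_of_mem_tail h2
  have hcons : L = v :: L.tail := w.support_eq_cons
  have hpos0 : 0 < L.length := by rw [hcons]; simp
  set idx : V → ℕ := fun u => L.idxOf u with hidxdef
  have hidx_lt : ∀ u, idx u < L.length := fun u => List.idxOf_lt_length_iff.mpr (hmem u)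
  have hget : ∀ u, L.getD (idx u) v = u := by
    intro u
    rw [List.getD_eq_getElem _ _ (hidx_lt u)]
    exact List.getElem_idxOf (hidx_lt u)
  have hidx_inj : ∀ u u', idx u = idx u' → u = u' := by
    intro u u' h
    rw [← hget u, ← hget u', h]
  have hpos : ∀ u, u ≠ v → 1 ≤ idx u := by
    intro u hu
    rcases Nat.eq_zero_or_pos (idx u) with h0 | h0
    · exfalso
      apply hu
      have := hget u
      rw [h0, hcons] at this
      simpa using this.symm
    · exact h0
  set par : V → V := fun u => L.getD (idx u - 1) v with hpardef
  have hstep : ∀ u, u ≠ v → s(par u, u) ∈ w.edges := by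
    intro u hu
    have h1 : idx u - 1 + 1 = idx u := Nat.sub_add_cancel (hpos u hu)
    have h2 := auxEdgeMem w v (idx u - 1) (by rw [h1, ← hL]; exact hidx_lt u)
    rw [← hL] at h2
    rw [h1, hget u] at h2
    exact h2
  have hadjG : ∀ u, u ≠ v → G.Adj (par u) u := fun u hu =>
    Walk.adj_of_mem_edges w (hstep u hu)
  have hlt : ∀ u, u ≠ v → idx (par u) < idx u := by
    intro u hu
    have h2 : idx u - 1 < L.length := lt_of_le_of_lt (Nat.sub_le _ _) (hidx_lt u)
    have h3 := auxIndexOfLe v L (idx u - 1) h2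
    have h4 := hpos u hu
    have h5 : idx (par u) ≤ idx u - 1 := h3
    omega
  set S : Set (Sym2 V) := {e | ∃ u, u ≠ v ∧ e = s(par u, u)} with hSdef
  set T : SimpleGraph V := SimpleGraph.fromEdgeSet S with hTdef
  have hTadj : ∀ x y, T.Adj x y ↔ (∃ u, u ≠ v ∧ s(x, y) = s(par u, u)) ∧ x ≠ y := by
    intro x y
    rw [hTdef, SimpleGraph.fromEdgeSet_adj]
    rfl
  have hTadj' : ∀ x y, T.Adj x y → (y ≠ v ∧ par y = x) ∨ (x ≠ v ∧ y = par x) := by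
    intro x y h
    obtain ⟨⟨u, hu, he⟩, hxy⟩ := (hTadj x y).mp h
    rw [Sym2.eq_iff] at he
    rcases he with ⟨h1, h2⟩ | ⟨h1, h2⟩
    · subst h2; exact Or.inl ⟨hu, h1.symm⟩
    · subst h1; exact Or.inr ⟨hu, h2⟩
  have hle : T ≤ G := by
    intro x y h
    rcases hTadj' x y h with ⟨h1, h2⟩ | ⟨h1, h2⟩
    · rw [← h2]; exact hadjG y h1
    · rw [h2]; exact (hadjG x h1).symm
  have hedges : T.edgeSet ⊆ {e | e ∈ w.edges} := by
    intro e he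
    rw [hTdef, SimpleGraph.edgeSet_fromEdgeSet] at he
    obtain ⟨⟨u, hu, rfl⟩, -⟩ := he
    exact hstep u hu
  have hTA : ∀ x, x ≠ v → T.Adj (par x) x := by
    intro x hx
    rw [hTadj]
    exact ⟨⟨x, hx, rfl⟩, (hadjG x hx).ne⟩
  have hreach : ∀ n x, idx x = n → T.Reachable v x := by
    intro n
    induction n using Nat.strong_induction_on with
    | _ n ih =>
      intro x hn
      by_cases hx : x = v
      · rw [hx]
      · exact (ih (idx (par x)) (hn ▸ hlt x hx) (par x) rfl).trans (hTA x hx).reachable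
  have hconn : T.Connected := by
    rw [SimpleGraph.connected_iff]
    exact ⟨fun x y => (hreach (idx x) x rfl).symm.trans (hreach (idx y) y rfl), ⟨v⟩⟩
  have hmax_edge : ∀ (m a b : V) (c : T.Walk a b), (∀ y ∈ c.support, idx y ≤ idx m) →
      ∀ e ∈ c.edges, m ∈ e → e = s(par m, m) := by
    intro m a b c hmx e he hme
    have heS : e ∈ S := by
      have h1 := Walk.edges_subset_edgeSet c he
      rw [hTdef, SimpleGraph.edgeSet_fromEdgeSet] at h1
      exact h1.1
    obtain ⟨u, hu, rfl⟩ := heS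
    rw [Sym2.mem_iff] at hme
    rcases hme with hme | hme
    · exfalso
      have hus : u ∈ c.support := Walk.snd_mem_support_of_mem_edges c he
      have h1 := hmx u hus
      have h2 := hlt u hu
      rw [← hme] at h2
      omega
    · rw [hme]
  have hacyc : T.IsAcyclic := by
    intro u c hc
    obtain ⟨m, hmS, hmax⟩ := Finset.exists_max_image c.support.toFinset idx
      ⟨u, List.mem_toFinset.mpr c.start_mem_support⟩
    rw [List.mem_toFinset] at hmS
    set c' := c.rotate m hmS with hc'def
    have hc' : c'.IsCycle := hc.rotate hmS
    have hsup : ∀ y ∈ c'.support, idx y ≤ idx m := by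
      intro y hy
      rw [c'.support_eq_cons] at hy
      rcases List.mem_cons.mp hy with hy | hy
      · exact hy ▸ le_refl _
      · have hperm := (Walk.support_rotate c m hmS).perm
        have : y ∈ c.support.tail := hperm.mem_iff.mp hy
        exact hmax y (List.mem_toFinset.mpr (List.mem_of_mem_tail this))
    have hlen3 := hc'.three_le_length
    have hedlen : c'.edges.length = c'.length := c'.length_edges
    have hne : c'.edges ≠ [] := by
      intro h; rw [h] at hedlen; simp at hedlen; omega
    have hdne : c'.darts ≠ [] := by
      intro h
      apply hne
      show c'.darts.map _ = []
      rw [h]; rfl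
    have h1e : c'.edges.head hne = (c'.darts.head hdne).edge := by
      show (c'.darts.map _).head hne = _
      exact List.head_map ..
    have h2e : c'.edges.getLast hne = (c'.darts.getLast hdne).edge := by
      show (c'.darts.map _).getLast hne = _
      exact List.getLast_map ..
    have hm1 : m ∈ c'.edges.head hne := by
      rw [h1e]
      have hf : (c'.darts.head hdne).fst = m := by rw [Walk.head_darts_eq_firstDart]; rfl
      show m ∈ s((c'.darts.head hdne).fst, (c'.darts.head hdne).snd)
      rw [hf]
      exact Sym2.mem_mk_left _ _
    have hm2 : m ∈ c'.edges.getLast hne := by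
      rw [h2e]
      have hf : (c'.darts.getLast hdne).snd = m := by rw [Walk.getLast_darts_eq_lastDart]; rfl
      show m ∈ s((c'.darts.getLast hdne).fst, (c'.darts.getLast hdne).snd)
      rw [hf]
      exact Sym2.mem_mk_right _ _
    have he1 := hmax_edge m m m c' hsup _ (List.head_mem hne) hm1
    have he2 := hmax_edge m m m c' hsup _ (List.getLast_mem hne) hm2
    exact auxHeadGetLastNe hc'.isTrail.edges_nodup (by omega) hne (he1.trans he2.symm)
  have hdeg : MaxDegLE T (k + 1) := by
    intro x
    have hch : {y | y ≠ v ∧ par y = x}.ncard ≤ L.count x := by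
      have h1 : {y | y ≠ v ∧ par y = x}.ncard ≤
          (((Finset.range L.length).filter (fun i => L.getD i v = x)) : Finset ℕ).card := by
        rw [← Set.ncard_coe_finset]
        have hmap : ∀ y ∈ {y | y ≠ v ∧ par y = x}, (fun y => idx y - 1) y ∈
            (((Finset.range L.length).filter (fun i => L.getD i v = x)) : Finset ℕ) := by
          intro y hy
          simp only [Finset.mem_coe, Finset.mem_filter, Finset.mem_range]
          exact ⟨lt_of_le_of_lt (Nat.sub_le _ _) (hidx_lt y), hy.2⟩
        have hinj : Set.InjOn (fun y => idx y - 1) {y | y ≠ v ∧ par y = x} := by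
          intro y hy y' hy' hyy
          have h2 := hpos y hy.1
          have h3 := hpos y' hy'.1
          exact hidx_inj y y' (by simp only at hyy; omega)
        exact Set.ncard_le_ncard_of_injOn _ hmap hinj (Set.toFinite _)
      exact h1.trans (auxCount v L x)
    by_cases hx : x = v
    · have hsub : {y | T.Adj x y} ⊆ {y | y ≠ v ∧ par y = x} := by
        intro y hy
        rcases hTadj' x y hy with h | h
        · exact ⟨h.1, h.2⟩
        · exact absurd hx h.1
      have h2 := Set.ncard_le_ncard hsub (Set.toFinite _)
      have hc2 : L.count x ≤ k + 1 := by
        have hwx := (hw x).2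
        rw [← hL] at hwx
        have hsplit : L.count x = (v :: L.tail).count x := by rw [← hcons]
        rw [hsplit, hx, List.count_cons_self]
        rw [hx] at hwx
        omega
      omega
    · have hsub : {y | T.Adj x y} ⊆ insert (par x) {y | y ≠ v ∧ par y = x} := by
        intro y hy
        rcases hTadj' x y hy with h | h
        · exact Set.mem_insert_of_mem _ ⟨h.1, h.2⟩
        · rw [h.2]; exact Set.mem_insert _ _
      have h2 := Set.ncard_le_ncard hsub (Set.toFinite _)
      have h3 := Set.ncard_insert_le (par x) {y | y ≠ v ∧ par y = x}
      have hc2 : L.count x ≤ k := by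
        have hwx := (hw x).2
        rw [← hL] at hwx
        have hsplit : L.count x = (v :: L.tail).count x := by rw [← hcons]
        rw [hsplit, List.count_cons_of_ne (Ne.symm hx)]
        exact hwx
      omega
  exact ⟨T, hle, hconn, hacyc, hdeg, hedges⟩
end

section
/- If a graph G contains two vertices s, t such that G − s − t has at least five components, then G has no spanning good cactus K with maximum degree at most three in which K − s − t would be required to have at least five components; more concretely: if K is a good cactus with maximum degree at most three and s, t ∈ V(K), then K − s − t has at most four components. -/
open SimpleGraph

variable {V : Type*}

/-! ### Auxiliary material for Statement 19 -/

section Aux19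

variable {K : SimpleGraph V} {s t : V}

/-- Neighbours of `a` other than `b`. -/
private def nbrSet (K : SimpleGraph V) (a b : V) : Set V := {v | K.Adj a v ∧ v ≠ b}

private lemma adj_delete2 {a b : {v : V // v ≠ s ∧ v ≠ t}} (h : K.Adj a.1 b.1) :
    (delete2 K s t).Adj a b := by
  simpa [delete2] using h

private lemma walk_transfer :
    ∀ {u v : V} (w : K.Walk u v), (∀ x ∈ w.support, x ≠ s ∧ x ≠ t) →
    ∀ (hu : u ≠ s ∧ u ≠ t) (hv : v ≠ s ∧ v ≠ t),
      (delete2 K s t).Reachable ⟨u, hu⟩ ⟨v, hv⟩ := by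
  intro u v w
  induction w with
  | nil => intro _ hu hv; exact Reachable.refl _
  | @cons u c v h p ih =>
    intro hw hu hv
    have hc : c ≠ s ∧ c ≠ t := hw c (by simp)
    exact ((adj_delete2 (a := ⟨u, hu⟩) (b := ⟨c, hc⟩) h).reachable).trans
      (ih (fun x hx => hw x (by simp [hx])) hc hv)

private lemma reach_end {u v : V} (w : K.Walk u v)
    (hw : ∀ x ∈ w.support, x ≠ s ∧ x ≠ t) {z : V} (hz : z ∈ w.support)
    (hz1 : z ≠ s) (hz2 : z ≠ t) (hv : v ≠ s ∧ v ≠ t) :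
    (delete2 K s t).Reachable ⟨z, hz1, hz2⟩ ⟨v, hv⟩ := by
  classical
  exact walk_transfer (w.dropUntil z hz)
    (fun x hx => hw x (w.support_dropUntil_subset hz hx)) ⟨hz1, hz2⟩ hv

private lemma arc_reach {m : V} (hm : m = s ∨ m = t) :
    ∀ {a b : V} (q : K.Walk a b), q.support.Nodup →
    (∀ z ∈ q.support, z = m ∨ (z ≠ s ∧ z ≠ t)) →
    m ≠ a → m ≠ b → ∀ (ha : a ≠ s ∧ a ≠ t) (hb : b ≠ s ∧ b ≠ t),
    ∀ v, v ∈ q.support → ∀ (hv1 : v ≠ s) (hv2 : v ≠ t),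
      (delete2 K s t).Reachable ⟨v, hv1, hv2⟩ ⟨a, ha⟩ ∨
      (delete2 K s t).Reachable ⟨v, hv1, hv2⟩ ⟨b, hb⟩ := by
  intro a b q
  induction q with
  | nil =>
    intro _ _ _ _ ha hb v hv hv1 hv2
    left
    simp only [Walk.support_nil, List.mem_singleton] at hv
    subst hv
    exact Reachable.refl _
  | @cons a c b h p ih =>
    intro hnd hcl hma hmb ha hb v hv hv1 hv2
    have hvm : v ≠ m := by rcases hm with rfl | rfl <;> assumption
    rcases (by simpa using hv : v = a ∨ v ∈ p.support) with rfl | hvp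
    · left; exact Reachable.refl _
    · by_cases hcm : c = m
      · subst hcm
        -- the very next vertex is the bad one; everything after it is clean
        cases p with
        | nil => exact absurd rfl hmb
        | @cons c c2 b h2 p2 =>
          have hnd' : c ∉ p2.support ∧ p2.support.Nodup := by
            have := hnd
            simp only [Walk.support_cons, List.nodup_cons] at this
            exact ⟨fun hmem => this.2.1 (by simp [hmem]), this.2.2⟩
          have hvp2 : v ∈ p2.support := by
            rcases (by simpa using hvp : v = c ∨ v ∈ p2.support) with rfl | h'
            · exact absurd rfl hvm
            · exact h'
          have hcl2 : ∀ x ∈ p2.support, x ≠ s ∧ x ≠ t := by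
            intro x hx
            rcases hcl x (by simp [hx]) with rfl | hcln
            · exact absurd hx hnd'.1
            · exact hcln
          right
          exact reach_end p2 hcl2 hvp2 hv1 hv2 hb
      · have hc : c ≠ s ∧ c ≠ t := by
          rcases hcl c (by simp) with rfl | hcln
          · exact absurd rfl hcm
          · exact hcln
        have hnd' : p.support.Nodup := by
          have := hnd; simp only [Walk.support_cons, List.nodup_cons] at this
          exact this.2
        rcases ih hnd' (fun z hz => hcl z (by simp [hz])) (fun he => hcm he.symm) hmb hc hb
            v hvp hv1 hv2 with hra | hrb
        · left
          exact hra.trans ((adj_delete2 (a := ⟨c, hc⟩) (b := ⟨a, ha⟩) h.symm).reachable)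
        · right; exact hrb

private lemma two_edges_common_cycle [Fintype V] {p' : V} (hbd : blockDegree K p' ≤ 2)
    {e1 e2 e3 : Sym2 V} (h1 : e1 ∈ K.edgeSet) (h2 : e2 ∈ K.edgeSet) (h3 : e3 ∈ K.edgeSet)
    (hs1 : p' ∈ e1) (hs2 : p' ∈ e2) (hs3 : p' ∈ e3)
    (d12 : e1 ≠ e2) (d13 : e1 ≠ e3) (d23 : e2 ≠ e3) :
    ∃ (u : V) (c : K.Walk u u), c.IsCycle ∧
      ((e1 ∈ c.edges ∧ e2 ∈ c.edges) ∨ (e1 ∈ c.edges ∧ e3 ∈ c.edges) ∨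
        (e2 ∈ c.edges ∧ e3 ∈ c.edges)) := by
  classical
  set B : Sym2 V → Set (Sym2 V) := fun e => {f ∈ K.edgeSet | SameBlock K e f} with hB
  have hmem : ∀ e, e ∈ K.edgeSet → p' ∈ e →
      B e ∈ {C : Set (Sym2 V) | IsBlock K C ∧ ∃ e ∈ C, p' ∈ e} := by
    intro e he hpe
    exact ⟨⟨e, he, rfl⟩, e, ⟨he, Or.inl rfl⟩, hpe⟩
  have key : ¬(B e1 ≠ B e2 ∧ B e1 ≠ B e3 ∧ B e2 ≠ B e3) := by
    rintro ⟨k12, k13, k23⟩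
    have hsub : ({B e1, B e2, B e3} : Set (Set (Sym2 V))) ⊆
        {C : Set (Sym2 V) | IsBlock K C ∧ ∃ e ∈ C, p' ∈ e} := by
      rintro C (rfl | rfl | rfl)
      · exact hmem e1 h1 hs1
      · exact hmem e2 h2 hs2
      · exact hmem e3 h3 hs3
    have h3' : ({B e1, B e2, B e3} : Set (Set (Sym2 V))).ncard = 3 :=
      Set.ncard_eq_three.mpr ⟨_, _, _, k12, k13, k23, rfl⟩
    have := Set.ncard_le_ncard hsub (Set.toFinite _)
    rw [h3'] at this
    exact absurd (this.trans hbd) (by norm_num)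
  have same : SameBlock K e1 e2 ∨ SameBlock K e1 e3 ∨ SameBlock K e2 e3 := by
    by_contra hcon
    push_neg at hcon
    apply key
    refine ⟨?_, ?_, ?_⟩
    · intro he
      have : e2 ∈ B e1 := he ▸ ⟨h2, Or.inl rfl⟩
      exact hcon.1 this.2
    · intro he
      have : e3 ∈ B e1 := he ▸ ⟨h3, Or.inl rfl⟩
      exact hcon.2.1 this.2
    · intro he
      have : e3 ∈ B e2 := he ▸ ⟨h3, Or.inl rfl⟩
      exact hcon.2.2 this.2
  rcases same with hsb | hsb | hsb
  · rcases hsb.resolve_left d12 with ⟨u, c, hc, hec, hfc⟩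
    exact ⟨u, c, hc, Or.inl ⟨hec, hfc⟩⟩
  · rcases hsb.resolve_left d13 with ⟨u, c, hc, hec, hfc⟩
    exact ⟨u, c, hc, Or.inr (Or.inl ⟨hec, hfc⟩)⟩
  · rcases hsb.resolve_left d23 with ⟨u, c, hc, hec, hfc⟩
    exact ⟨u, c, hc, Or.inr (Or.inr ⟨hec, hfc⟩)⟩

private lemma cycle_split {p' u : V} {c0 : K.Walk u u} (hc : c0.IsCycle)
    (hp : p' ∈ c0.support) :
    ∃ (x y : V) (q : K.Walk x y), K.Adj p' x ∧ K.Adj p' y ∧ x ≠ y ∧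
      x ∈ q.support ∧ y ∈ q.support ∧
      q.support.Nodup ∧ p' ∉ q.support ∧
      (∀ z, z ∈ c0.support ↔ (z = p' ∨ z ∈ q.support)) ∧
      (∀ e ∈ c0.edges, p' ∈ e → e = s(p', x) ∨ e = s(p', y)) := by
  classical
  have hd : (c0.rotate p' hp).IsCycle := hc.rotate hp
  have hsup : ∀ z, z ∈ (c0.rotate p' hp).support ↔ z ∈ c0.support := by
    intro z
    conv_rhs => rw [← Walk.take_spec c0 hp]
    rw [Walk.rotate, Walk.mem_support_append_iff, Walk.mem_support_append_iff]
    tauto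
  have hedg : ∀ e, e ∈ (c0.rotate p' hp).edges ↔ e ∈ c0.edges :=
    fun e => (Walk.rotate_edges c0 p' hp).mem_iff
  generalize c0.rotate p' hp = d at hd hsup hedg
  cases d with
  | nil => exact absurd rfl hd.ne_nil
  | cons h p =>
    rename_i x
    have hd' := (Walk.cons_isCycle_iff p h).mp hd
    cases p with
    | nil => exact absurd h (K.loopless.irrefl _)
    | cons h2 p2 =>
      rename_i c2
      obtain ⟨y, q0, h3, heq⟩ := Walk.exists_cons_eq_concat h2 p2
      rw [heq] at hd' hsup hedg
      have hsupq : (q0.concat h3).support = q0.support ++ [p'] := by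
        rw [Walk.support_concat]
      have hnodup : q0.support.Nodup ∧ p' ∉ q0.support := by
        have hnd := hd'.1.support_nodup
        rw [hsupq] at hnd
        obtain ⟨ha1, _, hdisj⟩ := List.nodup_append.mp hnd
        exact ⟨ha1, fun hmem => hdisj p' hmem p' (by simp) rfl⟩
      have hxq : x ∈ q0.support := q0.start_mem_support
      have hyq : y ∈ q0.support := q0.end_mem_support
      have hedges : (Walk.cons h (q0.concat h3)).edges =
          s(p', x) :: (q0.edges ++ [s(y, p')]) := by
        rw [Walk.edges_cons, Walk.edges_concat, List.concat_eq_append]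
      have hxy : x ≠ y := by
        intro hxyeq
        subst hxyeq
        have htr := hd.edges_nodup
        rw [heq, hedges] at htr
        rcases List.nodup_cons.mp htr with ⟨hni, _⟩
        exact hni (by simp [Sym2.eq_swap])
      have hsupd : (Walk.cons h (q0.concat h3)).support = p' :: (q0.support ++ [p']) := by
        rw [Walk.support_cons, hsupq]
      refine ⟨x, y, q0, h, h3.symm, hxy, hxq, hyq, hnodup.1, hnodup.2, ?_, ?_⟩
      · intro z
        rw [← hsup z, hsupd]
        simp only [List.mem_cons, List.mem_append, List.mem_singleton]
        tauto
      · intro e he hpe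
        rw [← hedg e, hedges] at he
        rcases (by simpa using he : e = s(p', x) ∨ e ∈ q0.edges ∨ e = s(y, p')) with
          h' | h' | h'
        · exact Or.inl h'
        · exfalso
          obtain ⟨z, rfl⟩ := Sym2.mem_iff_exists.mp hpe
          exact hnodup.2 (Walk.fst_mem_support_of_mem_edges q0 h')
        · exact Or.inr (h'.trans Sym2.eq_swap)

private lemma side_lemma [Fintype V] {p' o : V}
    (hpo : (p' = s ∧ o = t) ∨ (p' = t ∧ o = s))
    (hbd : blockDegree K p' ≤ 2) (hdeg : MaxDegLE K 3) :
    (∃ D : Set V, D.ncard ≤ 2 ∧ ∀ u ∈ nbrSet K p' o, ∀ (g1 : u ≠ s) (g2 : u ≠ t),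
      ∃ w, ∃ (w1 : w ≠ s) (w2 : w ≠ t), w ∈ D ∧
        (delete2 K s t).Reachable ⟨u, g1, g2⟩ ⟨w, w1, w2⟩) ∨
    (∃ W : Set V, W.ncard ≤ 4 ∧
      ∀ u, u ∈ nbrSet K p' o ∪ nbrSet K o p' → ∀ (g1 : u ≠ s) (g2 : u ≠ t),
      ∃ w, ∃ (w1 : w ≠ s) (w2 : w ≠ t), w ∈ W ∧
        (delete2 K s t).Reachable ⟨u, g1, g2⟩ ⟨w, w1, w2⟩) := by
  classical
  have hclean : ∀ z, z ≠ p' → z ≠ o → z ≠ s ∧ z ≠ t := by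
    rcases hpo with ⟨rfl, rfl⟩ | ⟨rfl, rfl⟩
    · exact fun z h1 h2 => ⟨h1, h2⟩
    · exact fun z h1 h2 => ⟨h2, h1⟩
  by_cases hn : (nbrSet K p' o).ncard ≤ 2
  · left
    refine ⟨nbrSet K p' o, hn, fun u hu g1 g2 => ⟨u, g1, g2, hu, Reachable.refl _⟩⟩
  · -- `p'` has exactly three neighbours avoiding `o`
    have hsub : nbrSet K p' o ⊆ {w | K.Adj p' w} := fun v hv => hv.1
    have hle : (nbrSet K p' o).ncard ≤ 3 :=
      (Set.ncard_le_ncard hsub (Set.toFinite _)).trans (hdeg p')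
    have h3 : (nbrSet K p' o).ncard = 3 := le_antisymm hle (by omega)
    obtain ⟨n1, n2, n3, hd12, hd13, hd23, hNp⟩ := Set.ncard_eq_three.mp h3
    have hmem1 : n1 ∈ nbrSet K p' o := by rw [hNp]; simp
    have hmem2 : n2 ∈ nbrSet K p' o := by rw [hNp]; simp
    have hmem3 : n3 ∈ nbrSet K p' o := by rw [hNp]; simp
    have hadjpo : ¬ K.Adj p' o := by
      intro hadj
      have hoNp : o ∉ nbrSet K p' o := fun h => h.2 rfl
      have : (insert o (nbrSet K p' o)).ncard ≤ 3 := by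
        refine (Set.ncard_le_ncard ?_ (Set.toFinite _)).trans (hdeg p')
        rintro v (rfl | hv)
        · exact hadj
        · exact hv.1
      rw [Set.ncard_insert_of_notMem hoNp (Set.toFinite _), h3] at this
      omega
    have hedne : ∀ {a b : V}, a ≠ b → s(p', a) ≠ s(p', b) :=
      fun hab he => hab (Sym2.congr_right.mp he)
    obtain ⟨u0, c0, hc0, hcase⟩ := two_edges_common_cycle hbd
      (K.mem_edgeSet.mpr hmem1.1) (K.mem_edgeSet.mpr hmem2.1) (K.mem_edgeSet.mpr hmem3.1)
      (Sym2.mem_mk_left _ _) (Sym2.mem_mk_left _ _) (Sym2.mem_mk_left _ _)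
      (hedne hd12) (hedne hd13) (hedne hd23)
    -- extract the two neighbours lying on a common cycle
    obtain ⟨a, b, hamem, hbmem, hab, hea, heb⟩ :
        ∃ a b, a ∈ nbrSet K p' o ∧ b ∈ nbrSet K p' o ∧ a ≠ b ∧
          s(p', a) ∈ c0.edges ∧ s(p', b) ∈ c0.edges := by
      rcases hcase with ⟨h1, h2⟩ | ⟨h1, h2⟩ | ⟨h1, h2⟩
      · exact ⟨n1, n2, hmem1, hmem2, hd12, h1, h2⟩
      · exact ⟨n1, n3, hmem1, hmem3, hd13, h1, h2⟩
      · exact ⟨n2, n3, hmem2, hmem3, hd23, h1, h2⟩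
    have hpc0 : p' ∈ c0.support := Walk.fst_mem_support_of_mem_edges c0 hea
    obtain ⟨x, y, q0, hax, hay, hxy, hxq, hyq, hqnd, hpq, hsupiff, hechar⟩ :=
      cycle_split hc0 hpc0
    -- identify {a, b} with {x, y} and obtain a path from a to b
    have hid : (a = x ∧ b = y) ∨ (a = y ∧ b = x) := by
      rcases hechar _ hea (Sym2.mem_mk_left _ _) with h' | h' <;>
        rcases hechar _ heb (Sym2.mem_mk_left _ _) with h'' | h''
      · exact absurd (Sym2.congr_right.mp (h'.trans h''.symm)) hab
      · exact Or.inl ⟨Sym2.congr_right.mp h', Sym2.congr_right.mp h''⟩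
      · exact Or.inr ⟨Sym2.congr_right.mp h', Sym2.congr_right.mp h''⟩
      · exact absurd (Sym2.congr_right.mp (h'.trans h''.symm)) hab
    obtain ⟨q, hqnd', hpq', hqsup⟩ :
        ∃ q : K.Walk a b, q.support.Nodup ∧ p' ∉ q.support ∧
          (∀ z, z ∈ q.support ↔ z ∈ q0.support) := by
      rcases hid with ⟨rfl, rfl⟩ | ⟨rfl, rfl⟩
      · exact ⟨q0, hqnd, hpq, fun z => Iff.rfl⟩
      · exact ⟨q0.reverse, by simpa using hqnd, by simpa using hpq,
          fun z => by simp⟩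
    have haclean : a ≠ s ∧ a ≠ t := hclean a hamem.1.ne' hamem.2
    have hbclean : b ≠ s ∧ b ≠ t := hclean b hbmem.1.ne' hbmem.2
    by_cases ho : o ∈ q.support
    · -- `o` lies on the cycle
      right
      have hoc0 : o ∈ c0.support := (hsupiff o).mpr (Or.inr ((hqsup o).mp ho))
      obtain ⟨xo, yo, qo, hoxo, hoyo, hxyo, hxoq, hyoq, _, _, hsupiff2, _⟩ :=
        cycle_split hc0 hoc0
      have hxoc0 : xo ∈ c0.support := (hsupiff2 xo).mpr (Or.inr hxoq)
      have hyoc0 : yo ∈ c0.support := (hsupiff2 yo).mpr (Or.inr hyoq)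
      set csup : Set V := {z | z ∈ c0.support} with hcsup
      refine ⟨nbrSet K p' o ∪ (nbrSet K o p' \ csup), ?_, ?_⟩
      · -- cardinality bound
        have hxo_ne : xo ≠ p' := fun h => hadjpo (h ▸ hoxo).symm
        have hyo_ne : yo ≠ p' := fun h => hadjpo (h ▸ hoyo).symm
        have hsub2 : nbrSet K o p' \ csup ⊆ {w | K.Adj o w} \ {xo, yo} := by
          rintro v ⟨hv, hvns⟩
          refine ⟨hv.1, ?_⟩
          rintro (rfl | rfl)
          · exact hvns hxoc0
          · exact hvns hyoc0
        have hcard2 : ({w | K.Adj o w} \ {xo, yo}).ncard ≤ 1 := by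
          have hxomem : xo ∈ {w | K.Adj o w} := hoxo
          have hyomem : yo ∈ ({w | K.Adj o w} \ {xo}) := ⟨hoyo, by simp [hxyo.symm]⟩
          have e1 : ({w | K.Adj o w} \ {xo}).ncard = {w | K.Adj o w}.ncard - 1 :=
            Set.ncard_diff_singleton_of_mem hxomem
          have e2 : (({w | K.Adj o w} \ {xo}) \ {yo}).ncard =
              ({w | K.Adj o w} \ {xo}).ncard - 1 :=
            Set.ncard_diff_singleton_of_mem hyomem
          have e3 : ({w | K.Adj o w} \ {xo}) \ {yo} = {w | K.Adj o w} \ {xo, yo} := by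
            rw [Set.diff_diff]
            congr 1
          rw [← e3, e2, e1]
          have := hdeg o
          omega
        calc (nbrSet K p' o ∪ (nbrSet K o p' \ csup)).ncard
            ≤ (nbrSet K p' o).ncard + (nbrSet K o p' \ csup).ncard :=
              Set.ncard_union_le _ _
          _ ≤ 3 + 1 := by
              refine Nat.add_le_add (le_of_eq h3) ?_
              exact (Set.ncard_le_ncard hsub2 (Set.toFinite _)).trans hcard2
          _ = 4 := rfl
      · -- coverage
        rintro u (hu | hu) g1 g2
        · exact ⟨u, g1, g2, Or.inl hu, Reachable.refl _⟩
        · by_cases huc : u ∈ csup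
          · -- `u` is on the cycle: it reaches `a` or `b` along an arc
            have huq : u ∈ q.support := by
              rcases (hsupiff u).mp huc with rfl | h'
              · exact absurd hu.2 (by simp)
              · exact (hqsup u).mpr h'
            have hcl : ∀ z ∈ q.support, z = o ∨ (z ≠ s ∧ z ≠ t) := by
              intro z hz
              by_cases hzo : z = o
              · exact Or.inl hzo
              · exact Or.inr (hclean z (fun h => hpq' (h ▸ hz)) hzo)
            have hoa : o ≠ a := fun h => hamem.2 h.symm
            have hob : o ≠ b := fun h => hbmem.2 h.symm
            have hm : o = s ∨ o = t := by
              rcases hpo with ⟨_, rfl⟩ | ⟨_, rfl⟩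
              · exact Or.inr rfl
              · exact Or.inl rfl
            rcases arc_reach hm q hqnd' hcl hoa hob haclean hbclean u huq g1 g2 with
              hr | hr
            · exact ⟨a, haclean.1, haclean.2, Or.inl hamem, hr⟩
            · exact ⟨b, hbclean.1, hbclean.2, Or.inl hbmem, hr⟩
          · exact ⟨u, g1, g2, Or.inr ⟨hu, huc⟩, Reachable.refl _⟩
    · -- `o` avoids the cycle: `a` and `b` are in the same component
      left
      have hqclean : ∀ z ∈ q.support, z ≠ s ∧ z ≠ t := by
        intro z hz
        exact hclean z (fun h => hpq' (h ▸ hz)) (fun h => ho (h ▸ hz))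
      have hreach : (delete2 K s t).Reachable ⟨a, haclean⟩ ⟨b, hbclean⟩ :=
        walk_transfer q hqclean haclean hbclean
      have hbin : b ∈ nbrSet K p' o := hbmem
      refine ⟨nbrSet K p' o \ {b}, ?_, ?_⟩
      · rw [Set.ncard_diff_singleton_of_mem hbin, h3]
      · intro u hu g1 g2
        by_cases hub : u = b
        · subst hub
          exact ⟨a, haclean.1, haclean.2, ⟨hamem, by simp [hab]⟩, hreach.symm⟩
        · exact ⟨u, g1, g2, ⟨hu, by simp [hub]⟩, Reachable.refl _⟩

private lemma boundary_reach (hconn : K.Connected) :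
    ∀ {x : V} (_ : K.Walk x s) (hx1 : x ≠ s) (hx2 : x ≠ t),
      ∃ u, ∃ (g1 : u ≠ s) (g2 : u ≠ t), (K.Adj s u ∨ K.Adj t u) ∧
        (delete2 K s t).Reachable ⟨x, hx1, hx2⟩ ⟨u, g1, g2⟩ := by
  intro x w
  induction w with
  | nil => intro hx1 _; exact absurd rfl hx1
  | @cons x y s h p ih =>
    intro hx1 hx2
    by_cases hy1 : y = s
    · exact ⟨x, hx1, hx2, Or.inl (hy1 ▸ h).symm, Reachable.refl _⟩
    · by_cases hy2 : y = t
      · exact ⟨x, hx1, hx2, Or.inr (hy2 ▸ h).symm, Reachable.refl _⟩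
      · obtain ⟨u, g1, g2, hadj, hr⟩ := ih hy1 hy2
        exact ⟨u, g1, g2, hadj,
          ((adj_delete2 (a := ⟨x, hx1, hx2⟩) (b := ⟨y, hy1, hy2⟩) h).reachable).trans hr⟩

end Aux19

/-- deleting two vertices from a good cactus of maximum degree at
most three leaves at most four components. -/
theorem delete_two_at_most_four_components [Fintype V] (K : SimpleGraph V)
    (h1 : IsGoodCactus K) (h2 : MaxDegLE K 3) (s t : V) :
    numComponents (delete2 K s t) ≤ 4 := by
  classical
  obtain ⟨⟨hconn, _⟩, hbdall⟩ := h1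
  have base : ∀ cc : (delete2 K s t).ConnectedComponent,
      ∃ u, ∃ (g1 : u ≠ s) (g2 : u ≠ t), (u ∈ nbrSet K s t ∪ nbrSet K t s) ∧
        (delete2 K s t).connectedComponentMk ⟨u, g1, g2⟩ = cc := by
    intro cc
    obtain ⟨v, hv⟩ := cc.exists_rep
    obtain ⟨w⟩ := hconn.preconnected v.1 s
    obtain ⟨u, g1, g2, hadj, hr⟩ := boundary_reach hconn w v.2.1 v.2.2
    refine ⟨u, g1, g2, ?_, ?_⟩
    · rcases hadj with h | h
      · exact Or.inl ⟨h, g2⟩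
      · exact Or.inr ⟨h, g1⟩
    · have hr' : (delete2 K s t).Reachable v ⟨u, g1, g2⟩ := hr
      exact (ConnectedComponent.sound hr'.symm).trans hv
  obtain ⟨W, hW4, hWcov⟩ : ∃ W : Set V, W.ncard ≤ 4 ∧
      ∀ u, u ∈ nbrSet K s t ∪ nbrSet K t s → ∀ (g1 : u ≠ s) (g2 : u ≠ t),
        ∃ w, ∃ (w1 : w ≠ s) (w2 : w ≠ t), w ∈ W ∧
          (delete2 K s t).Reachable ⟨u, g1, g2⟩ ⟨w, w1, w2⟩ := by
    rcases side_lemma (Or.inl ⟨rfl, rfl⟩) (hbdall s) h2 with ⟨Ds, hDs, hDscov⟩ | hB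
    · rcases side_lemma (K := K) (Or.inr ⟨rfl, rfl⟩) (hbdall t) h2 with
        ⟨Dt, hDt, hDtcov⟩ | hB'
      · refine ⟨Ds ∪ Dt, ?_, ?_⟩
        · exact (Set.ncard_union_le _ _).trans (by omega)
        · rintro u (hu | hu) g1 g2
          · obtain ⟨w, w1, w2, hwD, hrw⟩ := hDscov u hu g1 g2
            exact ⟨w, w1, w2, Or.inl hwD, hrw⟩
          · obtain ⟨w, w1, w2, hwD, hrw⟩ := hDtcov u hu g1 g2
            exact ⟨w, w1, w2, Or.inr hwD, hrw⟩
      · obtain ⟨W, hW, hcov⟩ := hB'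
        refine ⟨W, hW, ?_⟩
        rintro u (hu | hu) g1 g2
        · exact hcov u (Or.inr hu) g1 g2
        · exact hcov u (Or.inl hu) g1 g2
    · exact hB
  have cov : ∀ cc : (delete2 K s t).ConnectedComponent,
      ∃ w, ∃ (w1 : w ≠ s) (w2 : w ≠ t), w ∈ W ∧
        (delete2 K s t).connectedComponentMk ⟨w, w1, w2⟩ = cc := by
    intro cc
    obtain ⟨u, g1, g2, hu, hmk⟩ := base cc
    obtain ⟨w, w1, w2, hwW, hrw⟩ := hWcov u hu g1 g2
    exact ⟨w, w1, w2, hwW, (ConnectedComponent.sound hrw.symm).trans hmk⟩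
  have hfinal : (Set.univ : Set (delete2 K s t).ConnectedComponent).ncard ≤ W.ncard := by
    have hinj : Set.InjOn (fun cc => (cov cc).choose) Set.univ := by
      intro c1 _ c2 _ hfe
      obtain ⟨w1a, w2a, hwa, hma⟩ := (cov c1).choose_spec
      obtain ⟨w1b, w2b, hwb, hmb⟩ := (cov c2).choose_spec
      rw [← hma, ← hmb]
      congr 1
      exact Subtype.ext hfe
    refine Set.ncard_le_ncard_of_injOn (fun cc => (cov cc).choose) ?_ hinj (Set.toFinite _)
    intro cc _
    obtain ⟨w1, w2, hw, _⟩ := (cov cc).choose_spec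
    exact hw
  exact hfinal.trans hW4
end
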